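/- Let b : ℕ → ℂ with b 0 ≠ 0, m ≥ 1, and let α_k (for 0 ≤ k ≤ m-1) be the auxiliary sequences defined by the initial value table (α_k(n) = δ_{k,n} for n < m, α_k(m) = (δ_{k,0} - b(m-k))/b 0) and recurrence α_k(n) = (α_k(n-m) - ∑_{j=0}^{n-1} b (n-j) α_k(j))/b 0 for n > m. Then as formal power series, Gα_k(s) · (B(s) - s^m) = ∑_{n=k}^{m-1} b (n-k) s^n, where Gα_k(s) = ∑_{n≥0} α_k(n) s^n and B(s) = ∑_{n≥0} b n s^n. -/

import Mathlib

open PowerSeries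

theorem stmt_2 (b : ℕ → ℂ) (hb : b 0 ≠ 0) (m : ℕ) (hm : 1 ≤ m)
    (α : ℕ → ℕ → ℂ)
    (hα_init : ∀ k < m, ∀ n < m, α k n = if k = n then 1 else 0)
    (hα_m : ∀ k < m, α k m = ((if k = 0 then 1 else 0) - b (m - k)) / b 0)
    (hα_rec : ∀ k < m, ∀ n > m,
      α k n = (α k (n - m) - ∑ j ∈ Finset.range n, b (n - j) * α k j) / b 0) :
    ∀ k < m,
      PowerSeries.mk (α k) * (PowerSeries.mk b - (PowerSeries.X : ℂ⟦X⟧) ^ m)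
        = ∑ n ∈ Finset.Ico k m, PowerSeries.C (R := ℂ) (b (n - k)) * (PowerSeries.X : ℂ⟦X⟧) ^ n := by
  intro k hk
  ext n
  rw [PowerSeries.coeff_mul, Finset.Nat.sum_antidiagonal_eq_sum_range_succ_mk, map_sum]
  simp only [map_sub, PowerSeries.coeff_mk, PowerSeries.coeff_X_pow,
    PowerSeries.coeff_C_mul, mul_ite, mul_one, mul_zero]
  rw [Finset.sum_ite_eq (Finset.Ico k m) n (fun i => b (i - k))]
  rcases lt_trichotomy n m with hnm | hnm | hnm
  · -- n < m
    have h1 : ∀ j ∈ Finset.range (n+1),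
        α k j * (b (n-j) - if n - j = m then 1 else 0)
          = if k = j then b (n - j) else 0 := by
      intro j hj
      rw [Finset.mem_range, Nat.lt_succ_iff] at hj
      have h2 : (if n - j = m then (1:ℂ) else 0) = 0 := if_neg (by omega)
      rw [h2, hα_init k hk j (lt_of_le_of_lt hj hnm), sub_zero, ite_mul, one_mul, zero_mul]
    rw [Finset.sum_congr rfl h1, Finset.sum_ite_eq]
    by_cases hkn : k ≤ n
    · rw [if_pos (Finset.mem_range.mpr (by omega)),
        if_pos (Finset.mem_Ico.mpr ⟨hkn, hnm⟩)]
    · rw [if_neg (by rw [Finset.mem_range]; omega),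
        if_neg (by rw [Finset.mem_Ico]; omega)]
  · -- n = m
    subst hnm
    rw [if_neg (by simp [Finset.mem_Ico]), Finset.sum_range_succ]
    have h1 : ∀ j ∈ Finset.range n,
        α k j * (b (n-j) - if n - j = n then 1 else 0)
          = (if k = j then b (n - j) else 0) - (if k = j ∧ j = 0 then 1 else 0) := by
      intro j hj
      rw [Finset.mem_range] at hj
      rw [hα_init k hk j hj]
      by_cases hj0 : j = 0
      · subst hj0
        have h2 : (if n - 0 = n then (1:ℂ) else 0) = 1 := if_pos (by omega)
        rw [h2]
        by_cases hkj : k = (0:ℕ) <;> simp [hkj]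
      · have h2 : (if n - j = n then (1:ℂ) else 0) = 0 := if_neg (by omega)
        rw [h2]
        by_cases hkj : k = j <;> simp [hkj, hj0]
    rw [Finset.sum_congr rfl h1, Finset.sum_sub_distrib, Finset.sum_ite_eq,
      if_pos (Finset.mem_range.mpr hk)]
    have h2 : (∑ j ∈ Finset.range n, if k = j ∧ j = 0 then (1:ℂ) else 0)
        = if k = 0 then 1 else 0 := by
      rcases eq_or_ne k 0 with hk0 | hk0
      · subst hk0
        rw [if_pos rfl, Finset.sum_eq_single 0]
        · simp
        · intro j _ hj0; rw [if_neg (by tauto)]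
        · intro h; exact absurd (Finset.mem_range.mpr (by omega)) h
      · rw [if_neg hk0]
        apply Finset.sum_eq_zero
        intro j _
        rw [if_neg]; rintro ⟨h, rfl⟩; exact hk0 h
    have h3 : (if n - n = n then (1:ℂ) else 0) = 0 := if_neg (by omega)
    rw [h2, h3, sub_zero, hα_m k hk, Nat.sub_self, div_mul_cancel₀ _ hb]
    ring
  · -- n > m
    rw [if_neg (by simp [Finset.mem_Ico]; omega), Finset.sum_range_succ]
    have h1 : ∀ j ∈ Finset.range n,
        α k j * (b (n-j) - if n - j = m then 1 else 0)
          = b (n - j) * α k j - (if j = n - m then α k j else 0) := by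
      intro j hj
      rw [Finset.mem_range] at hj
      by_cases hjm : j = n - m
      · rw [if_pos hjm]
        have h2 : (if n - j = m then (1:ℂ) else 0) = 1 := if_pos (by omega)
        rw [h2]; ring
      · rw [if_neg hjm]
        have h2 : (if n - j = m then (1:ℂ) else 0) = 0 := if_neg (by omega)
        rw [h2]; ring
    rw [Finset.sum_congr rfl h1, Finset.sum_sub_distrib, Finset.sum_ite_eq',
      if_pos (Finset.mem_range.mpr (by omega))]
    have h3 : (if n - n = m then (1:ℂ) else 0) = 0 := if_neg (by omega)
    rw [h3, sub_zero, hα_rec k hk n hnm, Nat.sub_self, div_mul_cancel₀ _ hb]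
    ring
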